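/- Worst-case order for threshold-slot algorithms: consider n items with distinct values and k slots with thresholds T_1 >= T_2 >= ... >= T_k. An algorithm processes items one at a time; when an item with value v arrives, if any unfilled slot has threshold below v, the item fills the unfilled slot with the highest such threshold; otherwise the item is rejected. Then for any fixed values and thresholds, the total value of accepted items is minimized when the items arrive in increasing order of value. -/

import Mathlib

open Classical in
/-- The threshold-slot algorithm: slots are indexed by `Fin k` with thresholds `T`
(sorted nonincreasingly, so among available slots with threshold below an arriving
value, the one of smallest index has the highest threshold).  `run T vs S` is the
total value accepted when the items `vs` arrive in order and `S` is the set of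
currently unfilled slots: an arriving value `v` fills the available slot with the
highest threshold below `v` (the minimal-index eligible slot), and is rejected if no
such slot exists. -/
noncomputable def runSlots {k : ℕ} (T : Fin k → ℝ) : List ℝ → Finset (Fin k) → ℝ
  | [], _ => 0
  | v :: rest, S =>
    if h : (S.filter (fun s => T s < v)).Nonempty then
      v + runSlots T rest (S.erase ((S.filter (fun s => T s < v)).min' h))
    else runSlots T rest S

open Classical in
lemma runSlots_cons {k : ℕ} (T : Fin k → ℝ) (v : ℝ) (rest : List ℝ) (S : Finset (Fin k)) :
    runSlots T (v :: rest) S =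
      if h : (S.filter (fun s => T s < v)).Nonempty then
        v + runSlots T rest (S.erase ((S.filter (fun s => T s < v)).min' h))
      else runSlots T rest S := by rw [runSlots]

lemma runSlots_tail_mono {k : ℕ} (T : Fin k → ℝ) {xs ys : List ℝ}
    (h : ∀ S, runSlots T xs S ≤ runSlots T ys S) (v : ℝ) (S : Finset (Fin k)) :
    runSlots T (v :: xs) S ≤ runSlots T (v :: ys) S := by
  rw [runSlots_cons, runSlots_cons]
  split
  · exact add_le_add_right (h _) v
  · exact h S

lemma runSlots_cons_pos {k : ℕ} (T : Fin k → ℝ) (v : ℝ) (rest : List ℝ) (S : Finset (Fin k))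
    (h : (S.filter (fun s => T s < v)).Nonempty) :
    runSlots T (v :: rest) S =
      v + runSlots T rest (S.erase ((S.filter (fun s => T s < v)).min' h)) := by
  rw [runSlots_cons, dif_pos h]

lemma runSlots_cons_neg {k : ℕ} (T : Fin k → ℝ) (v : ℝ) (rest : List ℝ) (S : Finset (Fin k))
    (h : ¬ (S.filter (fun s => T s < v)).Nonempty) :
    runSlots T (v :: rest) S = runSlots T rest S := by
  rw [runSlots_cons, dif_neg h]

lemma min'_congr {α : Type*} [LinearOrder α] {s t : Finset α} (h : s = t)
    (hs : s.Nonempty) (ht : t.Nonempty) : s.min' hs = t.min' ht := by subst h; rfl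

lemma runSlots_swap {k : ℕ} {T : Fin k → ℝ} (hT : Antitone T) {a b : ℝ} (hab : a ≤ b)
    (r : List ℝ) (S : Finset (Fin k)) :
    runSlots T (a :: b :: r) S ≤ runSlots T (b :: a :: r) S := by
  have hAB : S.filter (fun s => T s < a) ⊆ S.filter (fun s => T s < b) := fun x hx =>
    Finset.mem_filter.2 ⟨(Finset.mem_filter.1 hx).1,
      lt_of_lt_of_le (Finset.mem_filter.1 hx).2 hab⟩
  by_cases hA : (S.filter (fun s => T s < a)).Nonempty
  · have hB : (S.filter (fun s => T s < b)).Nonempty := hA.mono hAB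
    have hsaA : (S.filter (fun s => T s < a)).min' hA ∈ S.filter (fun s => T s < a) :=
      Finset.min'_mem _ hA
    have hsbB : (S.filter (fun s => T s < b)).min' hB ∈ S.filter (fun s => T s < b) :=
      Finset.min'_mem _ hB
    set sa := (S.filter (fun s => T s < a)).min' hA with hsa
    set sb := (S.filter (fun s => T s < b)).min' hB with hsb
    have e1 : runSlots T (a :: b :: r) S = a + runSlots T (b :: r) (S.erase sa) :=
      runSlots_cons_pos T a _ S hA
    have e2 : runSlots T (b :: a :: r) S = b + runSlots T (a :: r) (S.erase sb) :=
      runSlots_cons_pos T b _ S hB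
    by_cases hmem : sb ∈ S.filter (fun s => T s < a)
    · -- the two filter sets are equal; in particular sa = sb
      have hEq : S.filter (fun s => T s < a) = S.filter (fun s => T s < b) := by
        refine Finset.Subset.antisymm hAB (fun x hx => ?_)
        by_contra hxA
        have hxS : x ∈ S := (Finset.mem_filter.1 hx).1
        have hax : a ≤ T x := not_lt.1 (fun h => hxA (Finset.mem_filter.2 ⟨hxS, h⟩))
        have hsb_lt : T sb < a := (Finset.mem_filter.1 hmem).2
        have hxsb : x < sb := by
          by_contra hle
          exact absurd (hT (not_lt.1 hle)) (not_le.2 (lt_of_lt_of_le hsb_lt hax))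
        exact absurd (Finset.min'_le _ _ hx) (not_le.2 hxsb)
      have hsab : sa = sb := by rw [hsa, hsb]; exact min'_congr hEq hA hB
      have hff : (S.erase sa).filter (fun s => T s < b)
          = (S.erase sa).filter (fun s => T s < a) := by
        rw [Finset.filter_erase, Finset.filter_erase, hEq]
      rw [e1, e2, ← hsab]
      by_cases h2 : ((S.erase sa).filter (fun s => T s < a)).Nonempty
      · have h2b : ((S.erase sa).filter (fun s => T s < b)).Nonempty := by rw [hff]; exact h2
        rw [runSlots_cons_pos T b r _ h2b, runSlots_cons_pos T a r _ h2,
          min'_congr hff h2b h2]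
        ring_nf
        exact le_refl _
      · have h2b : ¬ ((S.erase sa).filter (fun s => T s < b)).Nonempty := by
          rw [hff]; exact h2
        rw [runSlots_cons_neg T b r _ h2b, runSlots_cons_neg T a r _ h2]
        exact add_le_add_left hab _
    · -- sb ∉ filter a, so sb ≠ sa; both orders accept both a and b
      have hne : sb ≠ sa := fun h => hmem (h ▸ hsaA)
      -- LHS inner step
      have hsbB' : sb ∈ (S.erase sa).filter (fun s => T s < b) := by
        rw [Finset.filter_erase]; exact Finset.mem_erase.2 ⟨hne, hsbB⟩
      have hBne : ((S.erase sa).filter (fun s => T s < b)).Nonempty := ⟨sb, hsbB'⟩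
      have hmin1 : ((S.erase sa).filter (fun s => T s < b)).min' hBne = sb := by
        refine le_antisymm (Finset.min'_le _ _ hsbB') (Finset.min'_le _ _ ?_)
        have h := Finset.mem_filter.1 (Finset.min'_mem _ hBne)
        exact Finset.mem_filter.2 ⟨Finset.mem_of_mem_erase h.1, h.2⟩
      have e3 : runSlots T (b :: r) (S.erase sa) = b + runSlots T r ((S.erase sa).erase sb) := by
        rw [runSlots_cons_pos T b r _ hBne, hmin1]
      -- RHS inner step
      have hAe : (S.erase sb).filter (fun s => T s < a) = S.filter (fun s => T s < a) := by
        rw [Finset.filter_erase]; exact Finset.erase_eq_of_notMem hmem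
      have hAne : ((S.erase sb).filter (fun s => T s < a)).Nonempty := by rw [hAe]; exact hA
      have hmin2 : ((S.erase sb).filter (fun s => T s < a)).min' hAne = sa := by
        rw [hsa]; exact min'_congr hAe hAne hA
      have e4 : runSlots T (a :: r) (S.erase sb) = a + runSlots T r ((S.erase sb).erase sa) := by
        rw [runSlots_cons_pos T a r _ hAne, hmin2]
      rw [e1, e2, e3, e4, Finset.erase_right_comm]
      ring_nf
      exact le_refl _
  · -- a is rejected when it arrives first
    rw [runSlots_cons_neg T a _ S hA]
    by_cases hB : (S.filter (fun s => T s < b)).Nonempty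
    · rw [runSlots_cons_pos T b r S hB, runSlots_cons_pos T b _ S hB]
      have hA' : ¬ ((S.erase ((S.filter (fun s => T s < b)).min' hB)).filter
          (fun s => T s < a)).Nonempty := by
        rw [Finset.filter_erase]
        rintro ⟨x, hx⟩
        exact hA ⟨x, Finset.mem_of_mem_erase hx⟩
      rw [runSlots_cons_neg T a r _ hA']
    · rw [runSlots_cons_neg T b r S hB, runSlots_cons_neg T b _ S hB,
        runSlots_cons_neg T a r S hA]

lemma runSlots_orderedInsert {k : ℕ} {T : Fin k → ℝ} (hT : Antitone T) (a : ℝ) (l : List ℝ) :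
    ∀ S, runSlots T (List.orderedInsert (· ≤ ·) a l) S ≤ runSlots T (a :: l) S := by
  induction l with
  | nil => intro S; simp [List.orderedInsert]
  | cons b l ih =>
    intro S
    by_cases hab : a ≤ b
    · simp [List.orderedInsert, hab]
    · simp only [List.orderedInsert, if_neg hab]
      calc runSlots T (b :: List.orderedInsert (· ≤ ·) a l) S
          ≤ runSlots T (b :: a :: l) S := runSlots_tail_mono T ih b S
        _ ≤ runSlots T (a :: b :: l) S := runSlots_swap hT (le_of_not_ge hab) l S

lemma runSlots_insertionSort {k : ℕ} {T : Fin k → ℝ} (hT : Antitone T) (l : List ℝ) :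
    ∀ S, runSlots T (List.insertionSort (· ≤ ·) l) S ≤ runSlots T l S := by
  induction l with
  | nil => intro S; simp
  | cons a l ih =>
    intro S
    calc runSlots T (List.orderedInsert (· ≤ ·) a (List.insertionSort (· ≤ ·) l)) S
        ≤ runSlots T (a :: List.insertionSort (· ≤ ·) l) S :=
          runSlots_orderedInsert hT a _ S
      _ ≤ runSlots T (a :: l) S := runSlots_tail_mono T ih a S

/-- Worst-case order for threshold-slot algorithms: for distinct
positive values and nonincreasing thresholds, the total accepted value over any
arrival order `l₂` is at least the total accepted value when the items arrive in
increasing order of value (`l₁`). -/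
theorem stmt18 (k : ℕ) (T : Fin k → ℝ) (hT : Antitone T)
    (l₁ l₂ : List ℝ) (hperm : l₁.Perm l₂)
    (hsort : l₁.Pairwise (· ≤ ·)) (hnodup : l₁.Nodup)
    (hpos : ∀ v ∈ l₁, 0 < v) :
    runSlots T l₁ Finset.univ ≤ runSlots T l₂ Finset.univ := by
  have heq : l₁ = List.insertionSort (· ≤ ·) l₂ :=
    List.Perm.eq_of_pairwise' hsort
      (List.pairwise_insertionSort _ l₂) (hperm.trans (List.perm_insertionSort _ l₂).symm)
  rw [heq]
  exact runSlots_insertionSort hT l₂ _
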